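/- Plancherel identity for the mixed power function with μ = 3: under the hypotheses of the previous statement (nodes in [0,1], Σⱼ cⱼ = 1, Σⱼ cⱼ xⱼ = x ∈ [0,1]), with Θ(t) = e^{ixt} − Σⱼ cⱼ e^{i xⱼ t} and K(u) = (x-u)_+ − Σⱼ cⱼ (xⱼ-u)_+, one has ∫_ℝ |Θ(t)|² / t⁴ dt = 2π ∫₀¹ K(u)² du. -/

import Mathlib

open MeasureTheory Real Complex FourierTransform

lemma integrable_conj' {f : ℝ → ℂ} (hf : Integrable f) :
    Integrable (fun x => (starRingEnd ℂ) (f x)) := by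
  refine ⟨Complex.continuous_conj.comp_aestronglyMeasurable hf.1, ?_⟩
  simpa [HasFiniteIntegral] using hf.2

lemma fourier_conj {h : ℝ → ℂ} (x : ℝ) :
    𝓕 (fun ξ => (starRingEnd ℂ) (h ξ)) x = (starRingEnd ℂ) (𝓕⁻ h x) := by
  rw [Real.fourier_real_eq, Real.fourierInv_eq, ← integral_conj]
  congr 1 with v
  simp only [Circle.smul_def, map_mul, Real.fourierChar_apply, RCLike.inner_apply,
    conj_trivial, smul_eq_mul]
  congr 1
  rw [← Complex.exp_conj]
  congr 1
  simp only [map_mul, Complex.conj_ofReal, Complex.conj_I]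
  push_cast
  ring

lemma plancherel' {f : ℝ → ℂ} (hcont : Continuous f) (hf : Integrable f)
    (hf' : Integrable (𝓕 f)) :
    ∫ ξ : ℝ, ‖𝓕 f ξ‖^2 = ∫ v : ℝ, ‖f v‖^2 := by
  have key : ∫ ξ : ℝ, (𝓕 f ξ) * ((starRingEnd ℂ) (𝓕 f ξ))
      = ∫ v : ℝ, (f v) * ((starRingEnd ℂ) (f v)) := by
    have flipL : (innerₗ ℝ).flip = innerₗ ℝ := by
      apply LinearMap.ext; intro a; apply LinearMap.ext; intro b
      simp [real_inner_comm]
    have h2 := VectorFourier.integral_bilin_fourierIntegral_eq_flip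
      (E := ℂ) (F := ℂ) (G := ℂ) (μ := volume) (ν := volume)
      (L := innerₗ ℝ) (f := f) (g := fun ξ => (starRingEnd ℂ) (𝓕 f ξ))
      (ContinuousLinearMap.mul ℂ ℂ) Real.continuous_fourierChar
      (by exact continuous_inner) hf (integrable_conj' hf')
    rw [flipL] at h2
    simp only [ContinuousLinearMap.mul_apply'] at h2
    calc ∫ ξ : ℝ, (𝓕 f ξ) * ((starRingEnd ℂ) (𝓕 f ξ)) = _ := h2
      _ = ∫ v : ℝ, (f v) * ((starRingEnd ℂ) (f v)) := by
          congr 1 with v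
          congr 1
          have h3 : (VectorFourier.fourierIntegral 𝐞 volume (innerₗ ℝ)
              (fun ξ => (starRingEnd ℂ) (𝓕 f ξ)) v)
              = 𝓕 (fun ξ => (starRingEnd ℂ) (𝓕 f ξ)) v := rfl
          rw [h3, fourier_conj, hf.fourierInv_fourier_eq hf' hcont.continuousAt]
  have h1 : ∀ z : ℂ, z * (starRingEnd ℂ) z = ((‖z‖^2 : ℝ) : ℂ) := fun z => by
    rw [Complex.mul_conj']; push_cast; rfl
  simp only [h1] at key
  have e1 : ∫ ξ : ℝ, ((‖𝓕 f ξ‖^2 : ℝ) : ℂ) = ((∫ ξ : ℝ, ‖𝓕 f ξ‖^2 : ℝ) : ℂ) :=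
    integral_ofReal
  have e2 : ∫ v : ℝ, ((‖f v‖^2 : ℝ) : ℂ) = ((∫ v : ℝ, ‖f v‖^2 : ℝ) : ℂ) :=
    integral_ofReal
  rw [e1, e2] at key
  exact_mod_cast key

lemma exp_deriv' (t : ℝ) (u : ℝ) :
    HasDerivAt (fun u : ℝ => Complex.exp (Complex.I * u * t))
      (Complex.I * t * Complex.exp (Complex.I * u * t)) u := by
  have h : HasDerivAt (fun z : ℂ => Complex.exp (Complex.I * z * t))
      (Complex.I * t * Complex.exp (Complex.I * (u:ℂ) * t)) (u:ℂ) := by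
    have h1 : HasDerivAt (fun z : ℂ => Complex.I * z * t) (Complex.I * t) (u:ℂ) := by
      simpa using (((hasDerivAt_id (u:ℂ)).const_mul Complex.I).mul_const (t:ℂ))
    simpa [mul_comm] using h1.cexp
  exact h.comp_ofReal

lemma taylor_node (y t : ℝ) (hy0 : 0 ≤ y) (hy1 : y ≤ 1) (ht : t ≠ 0) :
    Complex.exp (Complex.I * y * t)
      = 1 + Complex.I * y * t + (Complex.I * t)^2
          * ∫ u in (0:ℝ)..1, ((max (y - u) 0 : ℝ) : ℂ) * Complex.exp (Complex.I * u * t) := by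
  have hit : (Complex.I * t) ≠ 0 := by
    simp [Complex.ext_iff, ht]
  have htc : (t:ℂ) ≠ 0 := by exact_mod_cast ht
  have hcont : Continuous fun u : ℝ => ((max (y - u) 0 : ℝ) : ℂ)
      * Complex.exp (Complex.I * u * t) := by
    fun_prop
  -- split the integral
  have hsplit : (∫ u in (0:ℝ)..1, ((max (y - u) 0 : ℝ) : ℂ) * Complex.exp (Complex.I * u * t))
      = (∫ u in (0:ℝ)..y, ((max (y - u) 0 : ℝ) : ℂ) * Complex.exp (Complex.I * u * t))
        + ∫ u in y..(1:ℝ), ((max (y - u) 0 : ℝ) : ℂ) * Complex.exp (Complex.I * u * t) := by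
    rw [intervalIntegral.integral_add_adjacent_intervals] <;> exact hcont.intervalIntegrable _ _
  have hzero : (∫ u in y..(1:ℝ), ((max (y - u) 0 : ℝ) : ℂ)
      * Complex.exp (Complex.I * u * t)) = 0 := by
    rw [intervalIntegral.integral_congr (g := fun _ => (0:ℂ)) ?_, intervalIntegral.integral_const]
    · simp
    · intro u hu
      rw [Set.uIcc_of_le hy1] at hu
      have : max (y - u) 0 = 0 := max_eq_right (by linarith [hu.1])
      simp [this]
  have hmain : (∫ u in (0:ℝ)..y, ((max (y - u) 0 : ℝ) : ℂ) * Complex.exp (Complex.I * u * t))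
      = Complex.exp (Complex.I * y * t)/(Complex.I*t)^2 - ((y:ℂ)/(Complex.I*t)
          + 1/(Complex.I*t)^2) := by
    have hcongr : (∫ u in (0:ℝ)..y, ((max (y - u) 0 : ℝ) : ℂ) * Complex.exp (Complex.I * u * t))
        = ∫ u in (0:ℝ)..y, (((y:ℂ) - u) * Complex.exp (Complex.I * u * t)) := by
      apply intervalIntegral.integral_congr
      intro u hu
      rw [Set.uIcc_of_le hy0] at hu
      have h4 : max (y - u) 0 = y - u := max_eq_left (by linarith [hu.2])
      simp only [h4]
      push_cast; ring
    rw [hcongr]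
    set F : ℝ → ℂ := fun u => ((y:ℂ) - u) * (Complex.exp (Complex.I * u * t) / (Complex.I * t))
      + Complex.exp (Complex.I * u * t) / (Complex.I * t)^2 with hF
    have hderiv : ∀ u ∈ Set.uIcc (0:ℝ) y,
        HasDerivAt F (((y:ℂ) - u) * Complex.exp (Complex.I * u * t)) u := by
      intro u _
      have h1 : HasDerivAt (fun u : ℝ => ((y:ℂ) - u)) (-1) u := by
        simpa using ((Complex.ofRealCLM.hasDerivAt (x := u)).const_sub (y:ℂ))
      have h2 := (exp_deriv' t u).div_const (Complex.I * t)
      have h3 := (exp_deriv' t u).div_const ((Complex.I * t)^2)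
      have := (h1.mul h2).add h3
      convert this using 1
      all_goals try rfl
      field_simp
      ring
    have hInt : IntervalIntegrable (fun u : ℝ => ((y:ℂ) - u) * Complex.exp (Complex.I * u * t))
        volume 0 y := by
      apply Continuous.intervalIntegrable
      fun_prop
    rw [intervalIntegral.integral_eq_sub_of_hasDerivAt hderiv hInt]
    simp only [hF]
    push_cast
    field_simp
    simp only [sub_self, mul_zero, zero_mul, Complex.exp_zero, sub_zero, one_mul, mul_one, zero_add]
    ring
  rw [hsplit, hzero, hmain]
  field_simp
  ring

set_option maxHeartbeats 1000000 in
lemma theta_eq (n : ℕ) (x : ℝ) (xs : Fin (n+1) → ℝ) (c : Fin (n+1) → ℝ)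
    (hxs : ∀ j, xs j ∈ Set.Icc (0:ℝ) 1) (hx : x ∈ Set.Icc (0:ℝ) 1)
    (hc1 : ∑ j, c j = 1) (hcx : ∑ j, c j * xs j = x) (t : ℝ) (ht : t ≠ 0) :
    Complex.exp (Complex.I * x * t) - ∑ j, (c j : ℂ) * Complex.exp (Complex.I * xs j * t)
      = (Complex.I * t)^2 * ∫ u in (0:ℝ)..1,
          ((max (x - u) 0 - ∑ j, c j * max (xs j - u) 0 : ℝ) : ℂ)
            * Complex.exp (Complex.I * u * t) := by
  have hcontm : ∀ y : ℝ, Continuous fun u : ℝ => ((max (y - u) 0 : ℝ) : ℂ)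
      * Complex.exp (Complex.I * u * t) := by intro y; fun_prop
  -- split the kernel integral
  have hKsplit : (∫ u in (0:ℝ)..1,
        ((max (x - u) 0 - ∑ j, c j * max (xs j - u) 0 : ℝ) : ℂ)
          * Complex.exp (Complex.I * u * t))
      = (∫ u in (0:ℝ)..1, ((max (x - u) 0 : ℝ) : ℂ) * Complex.exp (Complex.I * u * t))
        - ∑ j, (c j : ℂ) * ∫ u in (0:ℝ)..1,
            ((max (xs j - u) 0 : ℝ) : ℂ) * Complex.exp (Complex.I * u * t) := by
    have step1 : (∫ u in (0:ℝ)..1,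
          ((max (x - u) 0 - ∑ j, c j * max (xs j - u) 0 : ℝ) : ℂ)
            * Complex.exp (Complex.I * u * t))
        = ∫ u in (0:ℝ)..1, (((max (x - u) 0 : ℝ) : ℂ) * Complex.exp (Complex.I * u * t)
            - ∑ j, (c j : ℂ) * (((max (xs j - u) 0 : ℝ) : ℂ)
              * Complex.exp (Complex.I * u * t))) := by
      apply intervalIntegral.integral_congr
      intro u _
      push_cast
      rw [sub_mul, Finset.sum_mul]
      congr 1
      apply Finset.sum_congr rfl
      intro j _
      ring
    have int1 : IntervalIntegrable
        (fun u : ℝ => ((max (x - u) 0 : ℝ) : ℂ) * Complex.exp (Complex.I * u * t))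
        volume 0 1 := (hcontm x).intervalIntegrable _ _
    have int2 : ∀ j : Fin (n+1), IntervalIntegrable
        (fun u : ℝ => (c j : ℂ) * (((max (xs j - u) 0 : ℝ) : ℂ)
          * Complex.exp (Complex.I * u * t))) volume 0 1 :=
      fun j => (continuous_const.mul (hcontm (xs j))).intervalIntegrable _ _
    have int3 : IntervalIntegrable
        (fun u : ℝ => ∑ j, (c j : ℂ) * (((max (xs j - u) 0 : ℝ) : ℂ)
          * Complex.exp (Complex.I * u * t))) volume 0 1 := by
      apply Continuous.intervalIntegrable
      apply continuous_finset_sum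
      intro j _
      exact continuous_const.mul (hcontm (xs j))
    have step2 := intervalIntegral.integral_sub int1 int3
    have step3 := intervalIntegral.integral_finset_sum (μ := volume) (a := (0:ℝ)) (b := 1)
      (s := Finset.univ) (f := fun (j : Fin (n+1)) (u : ℝ) => (c j : ℂ)
        * (((max (xs j - u) 0 : ℝ) : ℂ) * Complex.exp (Complex.I * u * t)))
      (fun j _ => int2 j)
    have step4 : ∀ j : Fin (n+1), (∫ u in (0:ℝ)..1, (c j : ℂ)
        * (((max (xs j - u) 0 : ℝ) : ℂ) * Complex.exp (Complex.I * u * t)))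
        = (c j : ℂ) * ∫ u in (0:ℝ)..1, ((max (xs j - u) 0 : ℝ) : ℂ)
            * Complex.exp (Complex.I * u * t) :=
      fun j => intervalIntegral.integral_const_mul _ _
    rw [step1, step2, step3]
    congr 1
    exact Finset.sum_congr rfl fun j _ => step4 j
  rw [hKsplit]
  rw [taylor_node x t hx.1 hx.2 ht]
  have hnodes : ∀ j, Complex.exp (Complex.I * xs j * t)
      = 1 + Complex.I * xs j * t + (Complex.I * t)^2
          * ∫ u in (0:ℝ)..1, ((max (xs j - u) 0 : ℝ) : ℂ) * Complex.exp (Complex.I * u * t) :=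
    fun j => taylor_node (xs j) t (hxs j).1 (hxs j).2 ht
  simp only [hnodes]
  have hsum1 : (∑ j, (c j : ℂ)) = 1 := by push_cast [← hc1]; norm_cast
  have hsum2 : (∑ j, (c j : ℂ) * (xs j : ℂ)) = (x : ℂ) := by
    rw [← hcx]; push_cast; rfl
  have expand : ∑ j, (c j : ℂ) * (1 + Complex.I * xs j * t + (Complex.I*t)^2
        * ∫ u in (0:ℝ)..1, ((max (xs j - u) 0 : ℝ) : ℂ) * Complex.exp (Complex.I * u * t))
      = (∑ j, (c j:ℂ)) + Complex.I * t * (∑ j, (c j:ℂ) * xs j)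
        + (Complex.I*t)^2 * ∑ j, (c j:ℂ)
            * ∫ u in (0:ℝ)..1, ((max (xs j - u) 0 : ℝ) : ℂ)
               * Complex.exp (Complex.I * u * t) := by
    rw [Finset.mul_sum, Finset.mul_sum, ← Finset.sum_add_distrib, ← Finset.sum_add_distrib]
    exact Finset.sum_congr rfl fun j _ => by ring
  rw [expand, hsum1, hsum2]
  ring

lemma fourier_decay_integrable {g : ℝ → ℂ} (hgc : Continuous g) (C₂ C₁ : ℝ)
    (hb1 : ∀ ξ, ‖g ξ‖ ≤ C₂) (hb2 : ∀ ξ : ℝ, ξ ≠ 0 → ‖g ξ‖ ≤ C₁ / ξ^2) :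
    Integrable g := by
  have hC2 : 0 ≤ C₂ := le_trans (norm_nonneg _) (hb1 0)
  have hC1 : 0 ≤ C₁ := by
    have := hb2 1 one_ne_zero
    simpa using le_trans (norm_nonneg _) this
  set D : ℝ := 2 * max C₂ C₁ with hD
  have hmInt : Integrable (fun ξ : ℝ => D * (1 + ξ^2)⁻¹) :=
    integrable_inv_one_add_sq.const_mul D
  apply hmInt.mono' hgc.aestronglyMeasurable
  filter_upwards with ξ
  rcases le_or_gt (ξ^2) 1 with h | h
  · calc ‖g ξ‖ ≤ C₂ := hb1 ξ
      _ ≤ D * (1 + ξ^2)⁻¹ := by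
        rw [hD, ← div_eq_mul_inv, le_div_iff₀ (by positivity)]
        nlinarith [le_max_left C₂ C₁, le_max_right C₂ C₁]
  · have hξ : ξ ≠ 0 := by intro h0; rw [h0] at h; simp at h; linarith
    calc ‖g ξ‖ ≤ C₁ / ξ^2 := hb2 ξ hξ
      _ ≤ D * (1 + ξ^2)⁻¹ := by
        rw [hD, ← div_eq_mul_inv, div_le_div_iff₀ (by positivity) (by positivity)]
        nlinarith [le_max_right C₂ C₁, le_max_left C₂ C₁, sq_nonneg ξ]

lemma fourier_restrict (K : ℝ → ℝ) (hK0 : ∀ u, u ∉ Set.Icc (0:ℝ) 1 → K u = 0) (t : ℝ) :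
    𝓕 (fun u : ℝ => ((K u : ℝ) : ℂ)) (-(2*π)⁻¹ * t)
      = ∫ u in (0:ℝ)..1, ((K u : ℝ) : ℂ) * Complex.exp (Complex.I * u * t) := by
  rw [Real.fourier_real_eq]
  have step1 : (∫ v : ℝ, 𝐞 (-(v * (-(2*π)⁻¹ * t))) • ((K v : ℝ) : ℂ))
      = ∫ v : ℝ, ((K v : ℝ) : ℂ) * Complex.exp (Complex.I * v * t) := by
    congr 1 with v
    rw [Circle.smul_def, Real.fourierChar_apply]
    have hπ : (π:ℝ) ≠ 0 := Real.pi_ne_zero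
    have harg : 2 * π * -(v * (-(2*π)⁻¹ * t)) = v * t := by field_simp
    rw [harg, show ((v*t:ℝ):ℂ) * Complex.I = Complex.I * v * t by push_cast; ring, mul_comm]
    rw [smul_eq_mul, mul_comm]
  rw [step1]
  have step2 : (∫ v : ℝ, ((K v : ℝ) : ℂ) * Complex.exp (Complex.I * v * t))
      = ∫ v in Set.Icc (0:ℝ) 1, ((K v : ℝ) : ℂ) * Complex.exp (Complex.I * v * t) := by
    rw [setIntegral_eq_integral_of_forall_compl_eq_zero]
    intro v hv
    rw [hK0 v hv]
    simp
  rw [step2, integral_Icc_eq_integral_Ioc, ← intervalIntegral.integral_of_le zero_le_one]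

lemma real_restrict (K : ℝ → ℝ) (hK0 : ∀ u, u ∉ Set.Icc (0:ℝ) 1 → K u = 0) :
    (∫ v : ℝ, (K v)^2) = ∫ u in (0:ℝ)..1, (K u)^2 := by
  have step2 : (∫ v : ℝ, (K v)^2) = ∫ v in Set.Icc (0:ℝ) 1, (K v)^2 := by
    rw [setIntegral_eq_integral_of_forall_compl_eq_zero]
    intro v hv
    rw [hK0 v hv]
    simp
  rw [step2, integral_Icc_eq_integral_Ioc, ← intervalIntegral.integral_of_le zero_le_one]

lemma norm_exp_I_mul (a t : ℝ) : ‖Complex.exp (Complex.I * a * t)‖ = 1 := by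
  rw [Complex.norm_exp]
  simp

set_option maxHeartbeats 1000000 in
theorem plancherel_mixed_power_mu3 (n : ℕ) (x : ℝ) (xs : Fin (n+1) → ℝ)
    (c : Fin (n+1) → ℝ)
    (hxs : ∀ j, xs j ∈ Set.Icc (0:ℝ) 1) (hx : x ∈ Set.Icc (0:ℝ) 1)
    (hc1 : ∑ j, c j = 1) (hcx : ∑ j, c j * xs j = x) :
    (∫ t : ℝ, ‖Complex.exp (Complex.I * x * t)
        - ∑ j, (c j : ℂ) * Complex.exp (Complex.I * xs j * t)‖ ^ 2 / t ^ 4)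
      = 2 * Real.pi * ∫ u in (0:ℝ)..1,
          (max (x - u) 0 - ∑ j, c j * max (xs j - u) 0) ^ 2 := by
  set K : ℝ → ℝ := fun u => max (x - u) 0 - ∑ j, c j * max (xs j - u) 0 with hKdef
  set Kc : ℝ → ℂ := fun u => ((K u : ℝ) : ℂ) with hKcdef
  set Θ : ℝ → ℂ := fun t => Complex.exp (Complex.I * x * t)
      - ∑ j, (c j : ℂ) * Complex.exp (Complex.I * xs j * t) with hΘdef
  show (∫ t : ℝ, ‖Θ t‖ ^ 2 / t ^ 4) = 2 * π * ∫ u in (0:ℝ)..1, (K u) ^ 2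
  -- support of K
  have hK0 : ∀ u, u ∉ Set.Icc (0:ℝ) 1 → K u = 0 := by
    intro u hu
    rw [Set.mem_Icc, not_and_or] at hu
    rcases hu with hu | hu
    · push_neg at hu
      have h1 : max (x - u) 0 = x - u := max_eq_left (by linarith [hx.1])
      have h2 : ∀ j, max (xs j - u) 0 = xs j - u :=
        fun j => max_eq_left (by linarith [(hxs j).1])
      simp only [hKdef, h1, h2, mul_sub]
      rw [Finset.sum_sub_distrib, ← Finset.sum_mul, hc1, hcx]
      ring
    · push_neg at hu
      have h1 : max (x - u) 0 = 0 := max_eq_right (by linarith [hx.2])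
      have h2 : ∀ j, max (xs j - u) 0 = 0 :=
        fun j => max_eq_right (by linarith [(hxs j).2])
      simp only [hKdef, h1, h2, mul_zero, Finset.sum_const_zero, sub_zero]
  -- continuity
  have hKcont : Continuous K := by
    rw [hKdef]
    apply Continuous.sub
    · exact (continuous_const.sub continuous_id).max continuous_const
    · apply continuous_finset_sum
      intro j _
      exact continuous_const.mul ((continuous_const.sub continuous_id).max continuous_const)
  have hKccont : Continuous Kc := by
    rw [hKcdef]; exact Complex.continuous_ofReal.comp hKcont
  have hKcInt : Integrable Kc :=
    hKccont.integrable_of_hasCompactSupport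
      (HasCompactSupport.intro (isCompact_Icc (a := (0:ℝ)) (b := 1)) (fun u hu => by
        rw [hKcdef]; simp [hK0 u hu]))
  -- theta bound
  have hΘb : ∀ t : ℝ, ‖Θ t‖ ≤ 1 + ∑ j, |c j| := by
    intro t
    rw [hΘdef]
    refine le_trans (norm_sub_le _ _) (add_le_add ?_ ?_)
    · rw [norm_exp_I_mul]
    · refine le_trans (norm_sum_le _ _) (Finset.sum_le_sum fun j _ => ?_)
      rw [norm_mul, norm_exp_I_mul, mul_one, Complex.norm_real, Real.norm_eq_abs]
  -- fourier transform bounds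
  have hb1 : ∀ ξ : ℝ, ‖𝓕 Kc ξ‖ ≤ ∫ v : ℝ, ‖Kc v‖ := fun ξ =>
    VectorFourier.norm_fourierIntegral_le_integral_norm _ _ _ _ _
  have hb2 : ∀ ξ : ℝ, ξ ≠ 0 →
      ‖𝓕 Kc ξ‖ ≤ ((1 + ∑ j, |c j|) / (2*π)^2) / ξ^2 := by
    intro ξ hξ
    have hπ : (0:ℝ) < π := Real.pi_pos
    set t : ℝ := -(2*π*ξ) with htdef
    have ht : t ≠ 0 := by
      rw [htdef]
      intro h
      apply hξ
      have : 2*π*ξ = 0 := by linarith [neg_eq_zero.mp h]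
      rcases mul_eq_zero.mp this with h' | h'
      · exfalso; nlinarith
      · exact h'
    have harg : -(2*π)⁻¹ * t = ξ := by rw [htdef]; field_simp
    have e1 : 𝓕 Kc ξ = ∫ u in (0:ℝ)..1, Kc u * Complex.exp (Complex.I * u * t) := by
      rw [← harg]; exact fourier_restrict K hK0 t
    have e2 : Θ t = (Complex.I * t)^2
        * ∫ u in (0:ℝ)..1, Kc u * Complex.exp (Complex.I * u * t) :=
      theta_eq n x xs c hxs hx hc1 hcx t ht
    have hθ := hΘb t
    rw [e2, norm_mul, norm_pow, norm_mul, Complex.norm_I, one_mul,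
      Complex.norm_real, Real.norm_eq_abs, _root_.sq_abs] at hθ
    rw [e1]
    have ht2 : t^2 = (2*π)^2 * ξ^2 := by rw [htdef]; ring
    rw [ht2] at hθ
    rw [div_div, le_div_iff₀ (by positivity)]
    calc ‖∫ u in (0:ℝ)..1, Kc u * Complex.exp (Complex.I * u * t)‖ * ((2*π)^2 * ξ^2)
        = (2*π)^2 * ξ^2 * ‖∫ u in (0:ℝ)..1, Kc u * Complex.exp (Complex.I * u * t)‖ := by ring
      _ ≤ 1 + ∑ j, |c j| := hθ
  have hFcont : Continuous (𝓕 Kc) :=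
    VectorFourier.fourierIntegral_continuous Real.continuous_fourierChar
      (by exact continuous_inner) hKcInt
  have hFint : Integrable (𝓕 Kc) :=
    fourier_decay_integrable hFcont _ _ hb1 hb2
  have hplanch := plancherel' hKccont hKcInt hFint
  -- main chain
  have hstep1 : (∫ t : ℝ, ‖Θ t‖ ^ 2 / t ^ 4)
      = ∫ t : ℝ, ‖𝓕 Kc (-(2*π)⁻¹ * t)‖^2 := by
    apply MeasureTheory.integral_congr_ae
    filter_upwards [compl_mem_ae_iff.mpr (measure_singleton (0:ℝ))] with t ht
    simp only [Set.mem_compl_iff, Set.mem_singleton_iff] at ht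
    have e1 : 𝓕 Kc (-(2*π)⁻¹ * t) = ∫ u in (0:ℝ)..1, Kc u
        * Complex.exp (Complex.I * u * t) := fourier_restrict K hK0 t
    have e2 : Θ t = (Complex.I * t)^2
        * ∫ u in (0:ℝ)..1, Kc u * Complex.exp (Complex.I * u * t) :=
      theta_eq n x xs c hxs hx hc1 hcx t ht
    rw [e2, ← e1, norm_mul, norm_pow, norm_mul, Complex.norm_I, one_mul,
      Complex.norm_real, Real.norm_eq_abs, _root_.sq_abs]
    rw [mul_pow, ← pow_mul]
    have h4 : t^(2*2) = t^4 := by norm_num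
    rw [h4]
    field_simp
  have hstep2 : (∫ t : ℝ, ‖𝓕 Kc (-(2*π)⁻¹ * t)‖^2)
      = |((-(2*π)⁻¹)⁻¹ : ℝ)| • ∫ ξ : ℝ, ‖𝓕 Kc ξ‖^2 :=
    Measure.integral_comp_mul_left (fun ξ => ‖𝓕 Kc ξ‖^2) (-(2*π)⁻¹)
  have habs : |((-(2*π)⁻¹)⁻¹ : ℝ)| = 2*π := by
    have hπ : (0:ℝ) < π := Real.pi_pos
    have : ((-(2*π)⁻¹)⁻¹ : ℝ) = -(2*π) := by field_simp
    rw [this, abs_neg, abs_of_pos (by positivity)]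
  have hnormsq : ∀ v : ℝ, ‖Kc v‖^2 = (K v)^2 := by
    intro v
    rw [hKcdef]
    simp only
    rw [Complex.norm_real, Real.norm_eq_abs, _root_.sq_abs]
  calc (∫ t : ℝ, ‖Θ t‖ ^ 2 / t ^ 4)
      = ∫ t : ℝ, ‖𝓕 Kc (-(2*π)⁻¹ * t)‖^2 := hstep1
    _ = |((-(2*π)⁻¹)⁻¹ : ℝ)| • ∫ ξ : ℝ, ‖𝓕 Kc ξ‖^2 := hstep2
    _ = 2*π * ∫ ξ : ℝ, ‖𝓕 Kc ξ‖^2 := by rw [habs, smul_eq_mul]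
    _ = 2*π * ∫ v : ℝ, ‖Kc v‖^2 := by rw [hplanch]
    _ = 2*π * ∫ v : ℝ, (K v)^2 := by simp only [hnormsq]
    _ = 2*π * ∫ u in (0:ℝ)..1, (K u)^2 := by rw [real_restrict K hK0]
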